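/- If 0 < p < 0.01 and m' ≥ 2, n' ≥ 2m' are integers, then Σ_{ℓ ≥ μ ≥ m', ℓ+μ ≤ n'} C(n', ℓ+μ) · C(ℓ+μ, ℓ) · (p/(1-p))^(ℓμ) ≤ 2 · C(n', m') · (1 + (p/(1-p))^{m'})^{n'}. -/

import Mathlib

open Finset

lemma geo_aux (a : ℕ → ℝ) (hpos : ∀ μ, 0 ≤ a μ) :
    ∀ (k A : ℕ), (∀ μ, A ≤ μ → μ + 1 < A + k → a (μ + 1) ≤ a μ / 2) →
    ∑ i ∈ range k, a (A + i) ≤ 2 * a A := by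
  intro k
  induction k with
  | zero => intro A _; simp only [Finset.range_zero, Finset.sum_empty]; linarith [hpos A]
  | succ k ih =>
    intro A h
    rw [Finset.sum_range_succ']
    have h2 : ∑ i ∈ range k, a (A + (i + 1)) ≤ 2 * a (A + 1) := by
      calc ∑ i ∈ range k, a (A + (i + 1)) = ∑ i ∈ range k, a (A + 1 + i) := by
            apply Finset.sum_congr rfl; intro i _; congr 1; omega
        _ ≤ 2 * a (A + 1) := ih (A + 1) (fun μ hμ hμ2 => h μ (by omega) (by omega))
    rcases Nat.eq_zero_or_pos k with hk | hk
    · subst hk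
      simp only [Finset.range_zero, Finset.sum_empty, zero_add, Nat.add_zero]
      linarith [hpos A]
    · have hA1 : a (A + 1) ≤ a A / 2 := h A le_rfl (by omega)
      have : a (A + 0) = a A := by norm_num
      linarith

lemma halve (x : ℝ) (hx0 : 0 < x) (hx4 : x ≤ 1 / 4) (r μ : ℕ) (h : 2 * (μ + 1) ≤ r) :
    (r.choose (μ + 1) : ℝ) * x ^ ((μ + 1) * (r - (μ + 1))) ≤
      (r.choose μ : ℝ) * x ^ (μ * (r - μ)) / 2 := by
  obtain ⟨d, hd1, rfl⟩ : ∃ d, 1 ≤ d ∧ r = 2 * μ + 1 + d := ⟨r - 2 * μ - 1, by omega, by omega⟩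
  have e1 : 2 * μ + 1 + d - (μ + 1) = μ + d := by omega
  have e2 : 2 * μ + 1 + d - μ = μ + 1 + d := by omega
  rw [e1, e2]
  have hex : (μ + 1) * (μ + d) = μ * (μ + 1 + d) + d := by ring
  rw [hex, pow_add]
  have hrel : ((2 * μ + 1 + d).choose (μ + 1) : ℝ) * (μ + 1) =
      ((2 * μ + 1 + d).choose μ : ℝ) * (μ + 1 + d) := by
    have := Nat.choose_succ_right_eq (2 * μ + 1 + d) μ
    rw [e2] at this
    exact_mod_cast congrArg (Nat.cast : ℕ → ℝ) this
  have hC0 : (0:ℝ) < ((2 * μ + 1 + d).choose μ : ℝ) := by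
    exact_mod_cast Nat.choose_pos (by omega)
  have hμ1' : (0:ℝ) < (μ : ℝ) + 1 := by positivity
  have hxd : ((μ : ℝ) + 1 + d) * x ^ d ≤ ((μ : ℝ) + 1) / 2 := by
    have h2n : d + 1 ≤ 2 ^ d := Nat.lt_two_pow_self (n := d)
    have h2 : (d + 1 : ℝ) ≤ 2 ^ d := by exact_mod_cast h2n
    have h3 : (2 * x) ^ d ≤ 2 * x := by
      calc (2 * x) ^ d ≤ (2 * x) ^ 1 :=
            pow_le_pow_of_le_one (by positivity) (by linarith) hd1
        _ = 2 * x := pow_one _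
    have h4 : (0:ℝ) ≤ x ^ d := by positivity
    have h5 : ((μ : ℝ) + 1 + d) ≤ ((μ : ℝ) + 1) * (d + 1) := by
      nlinarith [Nat.cast_nonneg (α := ℝ) μ, Nat.cast_nonneg (α := ℝ) d]
    have h6 : (2:ℝ) ^ d * x ^ d = (2 * x) ^ d := (mul_pow 2 x d).symm
    calc ((μ : ℝ) + 1 + d) * x ^ d ≤ ((μ : ℝ) + 1) * (d + 1) * x ^ d := by
          apply mul_le_mul_of_nonneg_right h5 h4
      _ ≤ ((μ : ℝ) + 1) * (2 ^ d * x ^ d) := by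
          rw [mul_assoc]
          apply mul_le_mul_of_nonneg_left _ hμ1'.le
          exact mul_le_mul_of_nonneg_right h2 h4
      _ = ((μ : ℝ) + 1) * (2 * x) ^ d := by rw [h6]
      _ ≤ ((μ : ℝ) + 1) * (2 * x) :=
          mul_le_mul_of_nonneg_left h3 hμ1'.le
      _ ≤ ((μ : ℝ) + 1) / 2 := by nlinarith [Nat.cast_nonneg (α := ℝ) μ]
  have hμ1 : (0:ℝ) < (μ : ℝ) + 1 := by positivity
  set C1 := ((2 * μ + 1 + d).choose (μ + 1) : ℝ)
  set C0 := ((2 * μ + 1 + d).choose μ : ℝ)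
  have hC1 : C1 = C0 * ((μ : ℝ) + 1 + d) / ((μ : ℝ) + 1) := by
    field_simp
    exact_mod_cast hrel
  rw [hC1]
  have hE : (0:ℝ) ≤ x ^ (μ * (μ + 1 + d)) := by positivity
  calc C0 * ((μ : ℝ) + 1 + d) / ((μ : ℝ) + 1) * (x ^ (μ * (μ + 1 + d)) * x ^ d)
      = (C0 * x ^ (μ * (μ + 1 + d))) * (((μ : ℝ) + 1 + d) * x ^ d) / ((μ : ℝ) + 1) := by ring
    _ ≤ (C0 * x ^ (μ * (μ + 1 + d))) * (((μ : ℝ) + 1) / 2) / ((μ : ℝ) + 1) := by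
        gcongr
    _ = C0 * x ^ (μ * (μ + 1 + d)) / 2 := by field_simp

lemma row_bound (x : ℝ) (hx0 : 0 < x) (hx4 : x ≤ 1 / 4) (m' r : ℕ) :
    ∑ μ ∈ Icc m' (r / 2), (r.choose μ : ℝ) * x ^ (μ * (r - μ)) ≤
      2 * ((r.choose m' : ℝ) * x ^ (m' * (r - m'))) := by
  by_cases hmr : m' ≤ r / 2
  · rw [← Finset.Ico_add_one_right_eq_Icc, Finset.sum_Ico_eq_sum_range]
    exact geo_aux (fun μ => (r.choose μ : ℝ) * x ^ (μ * (r - μ)))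
      (fun μ => by positivity) (r / 2 + 1 - m') m'
      (fun μ hμ hμ2 => halve x hx0 hx4 r μ (by omega))
  · rw [Finset.Icc_eq_empty (by omega)]
    simp only [Finset.sum_empty]
    positivity

theorem double_sum_bound (m' n' : ℕ) (hm : 2 ≤ m') (hn : 2 * m' ≤ n')
    (p : ℝ) (hp : 0 < p) (hp1 : p < 0.01) :
    ∑ q ∈ (Finset.range (n' + 1) ×ˢ Finset.range (n' + 1)).filter
        (fun q => m' ≤ q.2 ∧ q.2 ≤ q.1 ∧ q.1 + q.2 ≤ n'),
        (n'.choose (q.1 + q.2) : ℝ) * ((q.1 + q.2).choose q.1 : ℝ) * (p / (1 - p)) ^ (q.1 * q.2)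
      ≤ 2 * (n'.choose m' : ℝ) * (1 + (p / (1 - p)) ^ m') ^ n' := by
  have hp1' : p < 1 / 100 := by norm_num at hp1; linarith
  have h1p : (0:ℝ) < 1 - p := by linarith
  set x := p / (1 - p) with hxdef
  have hx0 : 0 < x := div_pos hp h1p
  have hx4 : x ≤ 1 / 4 := by
    rw [hxdef, div_le_iff₀ h1p]; linarith
  -- reindex (ℓ, μ) ↦ (r, μ) = (ℓ + μ, μ)
  have hre : ∑ q ∈ (Finset.range (n' + 1) ×ˢ Finset.range (n' + 1)).filter
        (fun q => m' ≤ q.2 ∧ q.2 ≤ q.1 ∧ q.1 + q.2 ≤ n'),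
        (n'.choose (q.1 + q.2) : ℝ) * ((q.1 + q.2).choose q.1 : ℝ) * x ^ (q.1 * q.2)
      = ∑ s ∈ (Finset.range (n' + 1) ×ˢ Finset.range (n' + 1)).filter
        (fun s => m' ≤ s.2 ∧ 2 * s.2 ≤ s.1),
        (n'.choose s.1 : ℝ) * (s.1.choose s.2 : ℝ) * x ^ (s.2 * (s.1 - s.2)) := by
    apply Finset.sum_nbij' (fun q => (q.1 + q.2, q.2)) (fun s => (s.1 - s.2, s.2))
    · intro a ha
      simp only [Finset.mem_filter, Finset.mem_product, Finset.mem_range] at ha ⊢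
      omega
    · intro a ha
      simp only [Finset.mem_filter, Finset.mem_product, Finset.mem_range] at ha ⊢
      omega
    · intro a ha
      simp only [Finset.mem_filter, Finset.mem_product, Finset.mem_range] at ha
      ext <;> simp <;> omega
    · intro a ha
      simp only [Finset.mem_filter, Finset.mem_product, Finset.mem_range] at ha
      ext <;> simp <;> omega
    · intro a ha
      simp only [Finset.mem_filter, Finset.mem_product, Finset.mem_range] at ha
      simp only
      rw [Nat.choose_symm_add, Nat.add_sub_cancel, mul_comm a.2 a.1]
  rw [hre]
  -- split into rows
  rw [Finset.sum_filter, Finset.sum_product]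
  have hrow : ∀ r ∈ range (n' + 1),
      (∑ μ ∈ range (n' + 1), if m' ≤ μ ∧ 2 * μ ≤ r then
          (n'.choose r : ℝ) * (r.choose μ : ℝ) * x ^ (μ * (r - μ)) else 0)
        ≤ (n'.choose r : ℝ) * (2 * ((r.choose m' : ℝ) * x ^ (m' * (r - m')))) := by
    intro r hr
    rw [Finset.mem_range] at hr
    rw [← Finset.sum_filter]
    have hset : (range (n' + 1)).filter (fun μ => m' ≤ μ ∧ 2 * μ ≤ r) = Icc m' (r / 2) := by
      ext μ
      simp only [Finset.mem_filter, Finset.mem_range, Finset.mem_Icc]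
      omega
    rw [hset]
    calc ∑ μ ∈ Icc m' (r / 2), (n'.choose r : ℝ) * (r.choose μ : ℝ) * x ^ (μ * (r - μ))
        = (n'.choose r : ℝ) * ∑ μ ∈ Icc m' (r / 2), (r.choose μ : ℝ) * x ^ (μ * (r - μ)) := by
          rw [Finset.mul_sum]; apply Finset.sum_congr rfl; intros; ring
      _ ≤ (n'.choose r : ℝ) * (2 * ((r.choose m' : ℝ) * x ^ (m' * (r - m')))) := by
          apply mul_le_mul_of_nonneg_left (row_bound x hx0 hx4 m' r) (by positivity)
  calc ∑ r ∈ range (n' + 1), ∑ μ ∈ range (n' + 1), (if m' ≤ μ ∧ 2 * μ ≤ r then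
          (n'.choose r : ℝ) * (r.choose μ : ℝ) * x ^ (μ * (r - μ)) else 0)
      ≤ ∑ r ∈ range (n' + 1), (n'.choose r : ℝ) * (2 * ((r.choose m' : ℝ) * x ^ (m' * (r - m')))) :=
        Finset.sum_le_sum hrow
    _ = ∑ r ∈ Icc m' n', (n'.choose r : ℝ) * (2 * ((r.choose m' : ℝ) * x ^ (m' * (r - m')))) := by
        symm
        apply Finset.sum_subset
        · intro r hr; simp only [Finset.mem_Icc] at hr; simp only [Finset.mem_range]; omega
        · intro r hr hr2
          simp only [Finset.mem_range] at hr
          simp only [Finset.mem_Icc] at hr2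
          have : r.choose m' = 0 := Nat.choose_eq_zero_of_lt (by omega)
          rw [this]; push_cast; ring
    _ = ∑ j ∈ range (n' - m' + 1),
          2 * (n'.choose m' : ℝ) * ((n' - m').choose j : ℝ) * (x ^ m') ^ j := by
        rw [← Finset.Ico_add_one_right_eq_Icc, Finset.sum_Ico_eq_sum_range]
        have hcard : n' + 1 - m' = n' - m' + 1 := by omega
        rw [hcard]
        apply Finset.sum_congr rfl
        intro j hj
        rw [Finset.mem_range] at hj
        have hid : n'.choose (m' + j) * (m' + j).choose m' = n'.choose m' * (n' - m').choose j := by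
          have := Nat.choose_mul (n := n') (k := m' + j) (s := m') (by omega)
          simpa using this
        have hsub : m' + j - m' = j := by omega
        rw [hsub, ← pow_mul]
        have := congrArg (Nat.cast : ℕ → ℝ) hid
        push_cast at this
        nlinarith [this, pow_pos hx0 (m' * j)]
    _ = 2 * (n'.choose m' : ℝ) * (1 + x ^ m') ^ (n' - m') := by
        rw [add_comm 1 (x ^ m'), add_pow]
        rw [Finset.mul_sum]
        apply Finset.sum_congr rfl
        intro j hj
        push_cast
        ring
    _ ≤ 2 * (n'.choose m' : ℝ) * (1 + x ^ m') ^ n' := by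
        apply mul_le_mul_of_nonneg_left _ (by positivity)
        exact pow_le_pow_right₀ (by nlinarith [pow_pos hx0 m']) (by omega)
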